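/- For the bidirected n-gon with σ as above, the antisymmetrization map A₃ := id + σ₁₂σ₂₃ + σ₂₃σ₁₂ − σ₁₂ − σ₂₃ − σ₁₂σ₂₃σ₁₂ is identically zero on Ω¹ ⊗ Ω¹ ⊗ Ω¹. Hence the space of 3-forms Ω³ = (Ω¹)^{⊗3}/ker(A₃) vanishes and the differential calculus has dimension 2. -/

import Mathlib

/-- ℂ-basis-coefficient model of `(Ω¹)^{⊗3}` for the bidirected `n`-gon:
composable 3-paths `(μ, d₁, d₂, d₃)`. -/
abbrev Poly3 (n : ℕ) := ZMod n × Bool × Bool × Bool → ℂ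

/-- `σ₁₂ = σ ⊗ id`: swaps `d₁` and `d₂`. -/
noncomputable def sig12 (n : ℕ) : Poly3 n →ₗ[ℂ] Poly3 n :=
  LinearMap.funLeft ℂ ℂ fun p => (p.1, p.2.2.1, p.2.1, p.2.2.2)

/-- `σ₂₃ = id ⊗ σ`: swaps `d₂` and `d₃`. -/
noncomputable def sig23 (n : ℕ) : Poly3 n →ₗ[ℂ] Poly3 n :=
  LinearMap.funLeft ℂ ℂ fun p => (p.1, p.2.1, p.2.2.2, p.2.2.1)

/-- the Woronowicz antisymmetrizer
`A₃ = id + σ₁₂σ₂₃ + σ₂₃σ₁₂ − σ₁₂ − σ₂₃ − σ₁₂σ₂₃σ₁₂`. -/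
noncomputable def A3 (n : ℕ) : Poly3 n →ₗ[ℂ] Poly3 n :=
  LinearMap.id + sig12 n ∘ₗ sig23 n + sig23 n ∘ₗ sig12 n
    - sig12 n - sig23 n - sig12 n ∘ₗ sig23 n ∘ₗ sig12 n

/-- `A₃ = 0` on `Ω¹ ⊗ Ω¹ ⊗ Ω¹`; hence `Ω³ = (Ω¹)^{⊗3}/ker A₃`
vanishes (so the calculus has dimension 2). -/
theorem stmt8 (n : ℕ) (hn : 3 ≤ n) :
    A3 n = 0 ∧ Subsingleton (Poly3 n ⧸ LinearMap.ker (A3 n)) := by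
  have h : A3 n = 0 := by
    ext f p
    obtain ⟨μ, a, b, c⟩ := p
    simp only [A3, sig12, sig23, LinearMap.sub_apply, LinearMap.add_apply,
      LinearMap.comp_apply, LinearMap.id_apply, LinearMap.funLeft_apply,
      LinearMap.zero_apply, Pi.add_apply, Pi.sub_apply, Pi.zero_apply]
    cases a <;> cases b <;> cases c <;> ring
  refine ⟨h, ?_⟩
  rw [Submodule.Quotient.subsingleton_iff, h, LinearMap.ker_zero]
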